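/- Let (Φ₋, Φ₊) be a solution of the coupling problem with data η: real entire functions of exponential type zero with Φ₋(0) = Φ₊(0) = 1, Φ₋(λ) = η(λ)Φ₊(λ) for λ ∈ σ with η(λ) finite, and z Φ₋(z)Φ₊(z)/W(z) Herglotz–Nevanlinna. Then for every λ ∈ σ with η(λ) finite, η(λ) Φ₊(λ)² / (λ W'(λ)) ≤ 0. -/

import Mathlib

open OnePoint

/-- For any solution `(Φ₋, Φ₊)` of the coupling problem with data
`η`, one has `η(λ) Φ₊(λ)² / (λ W'(λ)) ≤ 0` for every `λ ∈ σ` with `η(λ)`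
finite. -/
theorem coupling_sign_condition
    (σ : Set ℝ) (hσ0 : ∀ x ∈ σ, x ≠ 0)
    (W : ℂ → ℂ) (hWd : Differentiable ℂ W)
    (hW : ∀ z : ℂ, HasProd (fun l : σ => (1 - z / ((l : ℝ) : ℂ))) (W z))
    (hW' : ∀ lam ∈ σ, deriv W (lam : ℂ) ≠ 0)
    (η : ℝ → OnePoint ℝ)
    (Φm Φp : ℂ → ℂ)
    (hΦmd : Differentiable ℂ Φm) (hΦpd : Differentiable ℂ Φp)
    (hΦmreal : ∀ x : ℝ, (Φm x).im = 0) (hΦpreal : ∀ x : ℝ, (Φp x).im = 0)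
    (hΦmtype : ∀ ε > (0 : ℝ), ∃ C : ℝ, ∀ z : ℂ,
      ‖Φm z‖ ≤ C * Real.exp (ε * ‖z‖))
    (hΦptype : ∀ ε > (0 : ℝ), ∃ C : ℝ, ∀ z : ℂ,
      ‖Φp z‖ ≤ C * Real.exp (ε * ‖z‖))
    (hnorm : Φm 0 = 1 ∧ Φp 0 = 1)
    (hcoup : ∀ lam ∈ σ, ∀ c : ℝ, η lam = (c : OnePoint ℝ) →
      Φm (lam : ℂ) = (c : ℂ) * Φp (lam : ℂ))
    (hherg : ∀ z : ℂ, 0 < z.im → 0 ≤ (z * Φm z * Φp z / W z).im) :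
    ∀ lam ∈ σ, ∀ c : ℝ, η lam = (c : OnePoint ℝ) →
      ((c : ℂ) * (Φp (lam : ℂ)) ^ 2 / ((lam : ℂ) * deriv W (lam : ℂ))).im = 0 ∧
      ((c : ℂ) * (Φp (lam : ℂ)) ^ 2 / ((lam : ℂ) * deriv W (lam : ℂ))).re ≤ 0 := by

  intro lam hlam c hc
  have hlam0 : lam ≠ 0 := hσ0 lam hlam
  have hlamC : (lam : ℂ) ≠ 0 := by exact_mod_cast hlam0
  -- W is real on the real axis
  have hWconj : ∀ z : ℂ, W ((starRingEnd ℂ) z) = (starRingEnd ℂ) (W z) := by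
    intro z
    have h1 := (hW z).map (starRingEnd ℂ).toMonoidHom (Complex.continuous_conj)
    have h2 : ((starRingEnd ℂ).toMonoidHom ∘ fun l : σ => (1 - z / ((l : ℝ) : ℂ)))
        = fun l : σ => (1 - (starRingEnd ℂ) z / ((l : ℝ) : ℂ)) := by
      funext l
      simp [Function.comp, map_sub, map_div₀, Complex.conj_ofReal]
    rw [h2] at h1
    exact (hW _).unique h1
  have hWreal : ∀ x : ℝ, (W x).im = 0 := by
    intro x
    have h := hWconj (x : ℂ)
    rw [Complex.conj_ofReal] at h
    have : (starRingEnd ℂ) (W x) = W x := h.symm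
    exact (Complex.conj_eq_iff_im.mp this)
  -- the derivative of W at lam is real
  have hd : HasDerivAt W (deriv W (lam : ℂ)) (lam : ℂ) := (hWd _).hasDerivAt
  have hW'im : (deriv W (lam : ℂ)).im = 0 := by
    have hr : HasDerivAt (fun t : ℝ => W (t : ℂ)) (deriv W (lam : ℂ)) lam := hd.comp_ofReal
    have him : HasDerivAt (fun t : ℝ => (W (t : ℂ)).im) ((deriv W (lam : ℂ)).im) lam := by
      exact (Complex.imCLM.hasFDerivAt.comp_hasDerivAt lam hr)
    have hzero : HasDerivAt (fun t : ℝ => (W (t : ℂ)).im) 0 lam := by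
      have hfun : (fun t : ℝ => (W (t : ℂ)).im) = fun _ => (0 : ℝ) :=
        funext fun t => hWreal t
      rw [hfun]; exact hasDerivAt_const _ _
    exact him.unique hzero
  -- W vanishes at lam
  have hW0 : W (lam : ℂ) = 0 := by
    have hzero : HasProd (fun l : σ => (1 - (lam : ℂ) / ((l : ℝ) : ℂ))) 0 := by
      have hev : ∀ᶠ s : Finset σ in Filter.atTop,
          (∏ i ∈ s, (1 - (lam : ℂ) / ((i : ℝ) : ℂ))) = 0 := by
        filter_upwards [Filter.eventually_ge_atTop ({(⟨lam, hlam⟩ : σ)} : Finset σ)] with s hs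
        refine Finset.prod_eq_zero (hs (Finset.mem_singleton_self _)) ?_
        simp [div_self hlamC]
      exact Filter.Tendsto.congr' (hev.mono fun s hs => hs.symm) tendsto_const_nhds
    exact ((hW (lam : ℂ)).unique hzero)
  set w : ℝ := (deriv W (lam : ℂ)).re with hw
  have hWl : deriv W (lam : ℂ) = (w : ℂ) := Complex.ext rfl (by simp [hW'im])
  have hwne : w ≠ 0 := by
    intro h0
    apply hW' lam hlam
    rw [hWl, h0, Complex.ofReal_zero]
  set φ : ℝ := (Φp (lam : ℂ)).re with hφdef
  have hφ : Φp (lam : ℂ) = (φ : ℂ) := Complex.ext rfl (by simpa using hΦpreal lam)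
  have hΦmc : Φm (lam : ℂ) = (c : ℂ) * Φp (lam : ℂ) := hcoup lam hlam c hc
  -- the residue limit
  have hslope : Filter.Tendsto (fun z : ℂ => (z - (lam : ℂ)) / W z)
      (nhdsWithin (lam : ℂ) {(lam : ℂ)}ᶜ) (nhds (deriv W (lam : ℂ))⁻¹) := by
    have h1 := hasDerivAt_iff_tendsto_slope.mp hd
    have h2 : Filter.Tendsto (fun z : ℂ => W z / (z - (lam : ℂ)))
        (nhdsWithin (lam : ℂ) {(lam : ℂ)}ᶜ) (nhds (deriv W (lam : ℂ))) := by
      refine h1.congr fun z => ?_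
      rw [slope_def_field, hW0, sub_zero]
    have h3 := h2.inv₀ (hW' lam hlam)
    refine h3.congr fun z => ?_
    rw [inv_div]
  have hpath : Filter.Tendsto (fun ε : ℝ => (lam : ℂ) + ε * Complex.I)
      (nhdsWithin 0 (Set.Ioi 0)) (nhdsWithin (lam : ℂ) {(lam : ℂ)}ᶜ) := by
    rw [tendsto_nhdsWithin_iff]
    constructor
    · have hc2 : Continuous fun ε : ℝ => (lam : ℂ) + ε * Complex.I :=
        continuous_const.add (Complex.continuous_ofReal.mul continuous_const)
      have hc3 := hc2.tendsto 0
      simpa using hc3.mono_left nhdsWithin_le_nhds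
    · filter_upwards [self_mem_nhdsWithin] with ε hε
      simp only [Set.mem_compl_iff, Set.mem_singleton_iff]
      intro h
      have h2 : (ε : ℂ) * Complex.I = 0 := by linear_combination h
      have h3 : ε = 0 := by simpa using congrArg Complex.im h2
      exact (Set.mem_Ioi.mp hε).ne' h3
  have hG : Filter.Tendsto (fun z : ℂ => z * Φm z * Φp z)
      (nhdsWithin (lam : ℂ) {(lam : ℂ)}ᶜ)
      (nhds ((lam : ℂ) * Φm (lam : ℂ) * Φp (lam : ℂ))) := by
    exact ((continuous_id.mul hΦmd.continuous).mul hΦpd.continuous).tendsto _ |>.mono_left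
      nhdsWithin_le_nhds
  have hmain : Filter.Tendsto
      (fun ε : ℝ => ((ε : ℂ) * Complex.I) *
        (((lam : ℂ) + ε * Complex.I) * Φm ((lam : ℂ) + ε * Complex.I) *
          Φp ((lam : ℂ) + ε * Complex.I) / W ((lam : ℂ) + ε * Complex.I)))
      (nhdsWithin 0 (Set.Ioi 0))
      (nhds (((lam : ℂ) * Φm (lam : ℂ) * Φp (lam : ℂ)) * (deriv W (lam : ℂ))⁻¹)) := by
    have h := (hG.mul hslope).comp hpath
    refine h.congr fun ε => ?_
    simp only [Function.comp]
    have h1 : (lam : ℂ) + ε * Complex.I - (lam : ℂ) = (ε : ℂ) * Complex.I := by ring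
    rw [h1]
    ring
  have hre := (Complex.continuous_re.tendsto _).comp hmain
  have hle : (((lam : ℂ) * Φm (lam : ℂ) * Φp (lam : ℂ)) * (deriv W (lam : ℂ))⁻¹).re ≤ 0 := by
    refine le_of_tendsto hre ?_
    filter_upwards [self_mem_nhdsWithin] with ε hε
    have hzim : ((lam : ℂ) + ε * Complex.I).im = ε := by simp
    have h0 := hherg ((lam : ℂ) + ε * Complex.I) (by rw [hzim]; exact hε)
    set u : ℂ := ((lam : ℂ) + ε * Complex.I) * Φm ((lam : ℂ) + ε * Complex.I) *
      Φp ((lam : ℂ) + ε * Complex.I) / W ((lam : ℂ) + ε * Complex.I) with hu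
    have hcomp : (((ε : ℂ) * Complex.I) * u).re = -(ε * u.im) := by
      simp [Complex.mul_re]
    simp only [Function.comp]
    rw [hcomp]
    exact neg_nonpos.mpr (mul_nonneg (le_of_lt hε) h0)
  -- express things with real numbers
  have hres : ((lam : ℂ) * Φm (lam : ℂ) * Φp (lam : ℂ)) * (deriv W (lam : ℂ))⁻¹
      = ((lam * (c * φ) * φ / w : ℝ) : ℂ) := by
    rw [hΦmc, hφ, hWl]
    push_cast
    ring
  have hlere : lam * (c * φ) * φ / w ≤ 0 := by
    have := hle
    rw [hres] at this
    simpa using this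
  have htarget : (c : ℂ) * (Φp (lam : ℂ)) ^ 2 / ((lam : ℂ) * deriv W (lam : ℂ))
      = ((c * φ ^ 2 / (lam * w) : ℝ) : ℂ) := by
    rw [hφ, hWl]
    push_cast
    ring
  rw [htarget]
  refine ⟨Complex.ofReal_im _, ?_⟩
  rw [Complex.ofReal_re]
  have hkey : c * φ ^ 2 / (lam * w) = (lam * (c * φ) * φ / w) / lam ^ 2 := by
    field_simp
  rw [hkey]
  exact div_nonpos_of_nonpos_of_nonneg hlere (sq_nonneg lam)
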